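/- arXiv:2203.15212 — 3 statements merged into one kernel-verified Lean document; each statement's English description precedes it below -/
import Mathlib

section
/- For every weight function ω supported on P, the L1 reconstruction error decomposes as RE_1(ω) = Σ_{{X,Y} ∈ P} ( E_{XY}·|1 − ω_{XY}/Π_{XY}| + (Π_{XY} − E_{XY})·|ω_{XY}/Π_{XY}| ) + Σ_{{X,Y} ∉ P} E_{XY}, where the last sum ranges over all unordered pairs of supernodes (including self-pairs) not in P. -/
open scoped Classical

/-- `PiCount c z` is the number `Π_z` of unordered pairs `{i, j}` of distinct
nodes with `{c i, c j} = z` (computed as half the number of ordered pairs). -/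
noncomputable def PiCount {V S : Type*} [Fintype V] (c : V → S) (z : Sym2 S) : ℝ :=
  ((Finset.univ.offDiag.filter
      (fun p : V × V => s(c p.1, c p.2) = z)).card : ℝ) / 2

/-- `ECount A c z` is the number `E_z` of unordered pairs `{i, j}` of distinct
nodes with `{c i, c j} = z` and `A i j = 1` (half the number of ordered pairs). -/
noncomputable def ECount {V S : Type*} [Fintype V] (A : V → V → ℝ) (c : V → S)
    (z : Sym2 S) : ℝ :=
  ((Finset.univ.offDiag.filter
      (fun p : V × V => s(c p.1, c p.2) = z ∧ A p.1 p.2 = 1)).card : ℝ) / 2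

/-- The matrix reconstructed from the weighted summary graph `(P, w)`:
`A'_{ij} = w_{c i, c j} / Π_{c i, c j}` if `i ≠ j` and `{c i, c j} ∈ P`, else `0`. -/
noncomputable def reconW {V S : Type*} [Fintype V] (c : V → S) (P : Finset (Sym2 S))
    (w : Sym2 S → ℝ) (i j : V) : ℝ :=
  if i ≠ j ∧ s(c i, c j) ∈ P then
    w (s(c i, c j)) / PiCount c (s(c i, c j)) else 0

/-- The `L1` reconstruction error of the weighted summary graph `(P, w)`:
the sum of `|A i j − A' i j|` over unordered pairs of distinct nodes
(computed as half the sum over ordered pairs). -/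
noncomputable def RE1 {V S : Type*} [Fintype V] (A : V → V → ℝ) (c : V → S)
    (P : Finset (Sym2 S)) (w : Sym2 S → ℝ) : ℝ :=
  (∑ p ∈ Finset.univ.offDiag, |A p.1 p.2 - reconW c P w p.1 p.2|) / 2

/-- The matrix reconstructed from the unweighted summary graph `P'`:
`Ǎ_{ij} = 1` if `i ≠ j` and `{c i, c j} ∈ P'`, else `0`. -/
noncomputable def reconU {V S : Type*} (c : V → S) (P' : Finset (Sym2 S))
    (i j : V) : ℝ :=
  if i ≠ j ∧ s(c i, c j) ∈ P' then 1 else 0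

/-- The `L1` reconstruction error of the unweighted summary graph `P'`. -/
noncomputable def RE1U {V S : Type*} [Fintype V] (A : V → V → ℝ) (c : V → S)
    (P' : Finset (Sym2 S)) : ℝ :=
  (∑ p ∈ Finset.univ.offDiag, |A p.1 p.2 - reconU c P' p.1 p.2|) / 2

/-- For every weight function `w` supported on the superedge set `P`, the `L1`
reconstruction error decomposes as
`RE₁(w) = Σ_{z ∈ P} (E_z·|1 − w_z/Π_z| + (Π_z − E_z)·|w_z/Π_z|) + Σ_{z ∉ P} E_z`,
the last sum ranging over all unordered pairs of supernodes (including
self-pairs) not in `P`. -/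
theorem stmt_7 {V S : Type*} [Fintype V] [Fintype S]
    (A : V → V → ℝ) (hSym : ∀ i j : V, A i j = A j i) (hDiag : ∀ i : V, A i i = 0)
    (h01 : ∀ i j : V, A i j = 0 ∨ A i j = 1)
    (c : V → S) (hc : Function.Surjective c)
    (P : Finset (Sym2 S)) (hP : ∀ z ∈ P, 1 ≤ PiCount c z)
    (w : Sym2 S → ℝ) :
    RE1 A c P w =
      (∑ z ∈ P, (ECount A c z * |1 - w z / PiCount c z|
          + (PiCount c z - ECount A c z) * |w z / PiCount c z|))
        + ∑ z ∈ Finset.univ \ P, ECount A c z := by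
  classical
  -- fiber decomposition over z : Sym2 S
  set F : Sym2 S → Finset (V × V) :=
    fun z => Finset.univ.offDiag.filter (fun p : V × V => s(c p.1, c p.2) = z) with hF
  have hcard1 : ∀ z : Sym2 S,
      (((F z).filter (fun p => A p.1 p.2 = 1)).card : ℝ) = 2 * ECount A c z := by
    intro z
    rw [hF, Finset.filter_filter]
    rw [ECount]
    ring
  have hcard0 : ∀ z : Sym2 S,
      (((F z).filter (fun p => ¬ A p.1 p.2 = 1)).card : ℝ)
        = 2 * PiCount c z - 2 * ECount A c z := by
    intro z
    have h := Finset.card_filter_add_card_filter_not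
      (s := F z) (p := fun p => A p.1 p.2 = 1)
    have h' : (((F z).filter (fun p => A p.1 p.2 = 1)).card : ℝ)
        + (((F z).filter (fun p => ¬ A p.1 p.2 = 1)).card : ℝ) = ((F z).card : ℝ) := by
      exact_mod_cast congrArg (Nat.cast (R := ℝ)) h
    have hn : ((F z).card : ℝ) = 2 * PiCount c z := by
      rw [PiCount]; ring
    rw [hcard1 z] at h'
    linarith
  have fiber : ∀ z : Sym2 S,
      ∑ p ∈ F z, |A p.1 p.2 - reconW c P w p.1 p.2|
        = if z ∈ P then
            2 * (ECount A c z * |1 - w z / PiCount c z|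
              + (PiCount c z - ECount A c z) * |w z / PiCount c z|)
          else 2 * ECount A c z := by
    intro z
    have habs : ∀ p ∈ F z, |A p.1 p.2 - reconW c P w p.1 p.2|
        = if A p.1 p.2 = 1 then
            (if z ∈ P then |1 - w z / PiCount c z| else 1)
          else (if z ∈ P then |w z / PiCount c z| else 0) := by
      intro p hp
      rw [hF, Finset.mem_filter, Finset.mem_offDiag] at hp
      obtain ⟨⟨-, -, hne⟩, hz⟩ := hp
      rw [reconW, hz]
      by_cases hzP : z ∈ P
      · rw [if_pos ⟨hne, hzP⟩, if_pos hzP, if_pos hzP]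
        rcases h01 p.1 p.2 with h | h <;> rw [h]
        · rw [if_neg (by norm_num), abs_sub_comm]
          simp
        · simp
      · rw [if_neg (by tauto), if_neg hzP, if_neg hzP]
        rcases h01 p.1 p.2 with h | h <;> rw [h] <;> simp
    rw [Finset.sum_congr rfl habs]
    rw [Finset.sum_ite, Finset.sum_const, Finset.sum_const]
    rw [nsmul_eq_mul, nsmul_eq_mul, hcard1 z, hcard0 z]
    by_cases hzP : z ∈ P
    · rw [if_pos hzP, if_pos hzP, if_pos hzP]; ring
    · rw [if_neg hzP, if_neg hzP, if_neg hzP]; ring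
  have hmain : ∑ p ∈ Finset.univ.offDiag, |A p.1 p.2 - reconW c P w p.1 p.2|
      = ∑ z : Sym2 S, ∑ p ∈ F z, |A p.1 p.2 - reconW c P w p.1 p.2| := by
    rw [hF]
    exact (Finset.sum_fiberwise _ (fun p : V × V => s(c p.1, c p.2)) _).symm
  rw [RE1, hmain, Finset.sum_congr rfl (fun z _ => fiber z)]
  rw [← Finset.sum_sdiff (Finset.subset_univ P)]
  have h1 : ∑ z ∈ Finset.univ \ P,
      (if z ∈ P then 2 * (ECount A c z * |1 - w z / PiCount c z|
          + (PiCount c z - ECount A c z) * |w z / PiCount c z|)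
       else 2 * ECount A c z) = ∑ z ∈ Finset.univ \ P, 2 * ECount A c z := by
    refine Finset.sum_congr rfl fun z hz => ?_
    rw [if_neg (Finset.mem_sdiff.mp hz).2]
  have h2 : ∑ z ∈ P,
      (if z ∈ P then 2 * (ECount A c z * |1 - w z / PiCount c z|
          + (PiCount c z - ECount A c z) * |w z / PiCount c z|)
       else 2 * ECount A c z)
      = ∑ z ∈ P, 2 * (ECount A c z * |1 - w z / PiCount c z|
          + (PiCount c z - ECount A c z) * |w z / PiCount c z|) := by
    refine Finset.sum_congr rfl fun z hz => ?_
    rw [if_pos hz]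
  rw [h1, h2, ← Finset.mul_sum, ← Finset.mul_sum]
  ring
end

section
/- For every superedge set P and every weight function ω supported on P, there exists a superedge set P' (with the same supernode partition) whose unweighted L1 reconstruction error satisfies RĚ_1(P') ≤ RE_1(ω); that is, with a fixed partition into supernodes, the unweighted summarization model can always achieve an L1 reconstruction error at most that of any weighted summary graph. -/
open scoped Classical

open Finset in
lemma sum_abs_const_aux {V S : Type*} [Fintype V] (A : V → V → ℝ)
    (h01 : ∀ i j : V, A i j = 0 ∨ A i j = 1) (c : V → S) (z : Sym2 S) (x : ℝ) :
    ∑ p ∈ univ.offDiag.filter (fun p : V × V => s(c p.1, c p.2) = z),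
        |A p.1 p.2 - x|
      = ((univ.offDiag.filter
            (fun p : V × V => s(c p.1, c p.2) = z ∧ A p.1 p.2 = 1)).card : ℝ)
          * |1 - x|
        + (((univ.offDiag.filter
              (fun p : V × V => s(c p.1, c p.2) = z)).card : ℝ)
            - ((univ.offDiag.filter
              (fun p : V × V => s(c p.1, c p.2) = z ∧ A p.1 p.2 = 1)).card : ℝ))
          * |x| := by
  classical
  set F := univ.offDiag.filter (fun p : V × V => s(c p.1, c p.2) = z) with hFdef
  have hsplit : univ.offDiag.filter
      (fun p : V × V => s(c p.1, c p.2) = z ∧ A p.1 p.2 = 1)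
      = F.filter (fun p => A p.1 p.2 = 1) := by
    rw [hFdef, Finset.filter_filter]
  rw [hsplit]
  rw [← Finset.sum_filter_add_sum_filter_not F (fun p => A p.1 p.2 = 1)]
  have h1 : ∑ p ∈ F.filter (fun p => A p.1 p.2 = 1), |A p.1 p.2 - x|
      = ((F.filter (fun p => A p.1 p.2 = 1)).card : ℝ) * |1 - x| := by
    rw [Finset.sum_congr rfl (fun p hp => ?_), Finset.sum_const, nsmul_eq_mul]
    rw [(Finset.mem_filter.mp hp).2]
  have h2 : ∑ p ∈ F.filter (fun p => ¬ A p.1 p.2 = 1), |A p.1 p.2 - x|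
      = ((F.filter (fun p => ¬ A p.1 p.2 = 1)).card : ℝ) * |x| := by
    rw [Finset.sum_congr rfl (fun p hp => ?_), Finset.sum_const, nsmul_eq_mul]
    have h0 : A p.1 p.2 = 0 := (h01 p.1 p.2).resolve_right (Finset.mem_filter.mp hp).2
    rw [h0, zero_sub, abs_neg]
  rw [h1, h2]
  have hcard : (F.filter (fun p => A p.1 p.2 = 1)).card
      + (F.filter (fun p => ¬ A p.1 p.2 = 1)).card = F.card :=
    Finset.card_filter_add_card_filter_not _
  have : ((F.filter (fun p => ¬ A p.1 p.2 = 1)).card : ℝ)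
      = (F.card : ℝ) - ((F.filter (fun p => A p.1 p.2 = 1)).card : ℝ) := by
    have := congrArg (fun n : ℕ => (n : ℝ)) hcard
    push_cast at this
    linarith
  rw [this]

open Finset

/-- For every superedge set `P` and weight function `w` supported on `P`, there
is a superedge set `P'` (with the same supernode partition) whose unweighted
`L1` reconstruction error satisfies `RĚ₁(P') ≤ RE₁(w)`. -/
theorem stmt_12 {V S : Type*} [Fintype V] [Fintype S]
    (A : V → V → ℝ) (hSym : ∀ i j : V, A i j = A j i) (hDiag : ∀ i : V, A i i = 0)
    (h01 : ∀ i j : V, A i j = 0 ∨ A i j = 1)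
    (c : V → S) (hc : Function.Surjective c)
    (P : Finset (Sym2 S)) (hP : ∀ z ∈ P, 1 ≤ PiCount c z)
    (w : Sym2 S → ℝ) :
    ∃ P' : Finset (Sym2 S), (∀ z ∈ P', 1 ≤ PiCount c z) ∧
      RE1U A c P' ≤ RE1 A c P w := by
  classical
  set P' : Finset (Sym2 S) :=
    P.filter (fun z => PiCount c z ≤ 2 * ECount A c z) with hP'def
  refine ⟨P', fun z hz => hP z (Finset.mem_of_mem_filter z hz), ?_⟩
  unfold RE1U RE1
  gcongr ?_ / 2
  rw [← Finset.sum_fiberwise Finset.univ.offDiag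
      (fun p : V × V => s(c p.1, c p.2))
      (fun p => |A p.1 p.2 - reconU c P' p.1 p.2|),
    ← Finset.sum_fiberwise Finset.univ.offDiag
      (fun p : V × V => s(c p.1, c p.2))
      (fun p => |A p.1 p.2 - reconW c P w p.1 p.2|)]
  apply Finset.sum_le_sum
  intro z _
  -- constants
  set u : ℝ := if z ∈ P' then 1 else 0 with hu
  set v : ℝ := if z ∈ P then w z / PiCount c z else 0 with hv
  have hrU : ∀ p ∈ univ.offDiag.filter
      (fun p : V × V => s(c p.1, c p.2) = z),
      reconU c P' p.1 p.2 = u := by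
    intro p hp
    obtain ⟨hpo, hpz⟩ := Finset.mem_filter.mp hp
    have hne : p.1 ≠ p.2 := (Finset.mem_offDiag.mp hpo).2.2
    simp only [reconU, hpz, hu, hne, ne_eq, not_false_iff, true_and]
  have hrW : ∀ p ∈ univ.offDiag.filter
      (fun p : V × V => s(c p.1, c p.2) = z),
      reconW c P w p.1 p.2 = v := by
    intro p hp
    obtain ⟨hpo, hpz⟩ := Finset.mem_filter.mp hp
    have hne : p.1 ≠ p.2 := (Finset.mem_offDiag.mp hpo).2.2
    simp only [reconW, hpz, hv, hne, ne_eq, not_false_iff, true_and]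
  have hsU : ∑ p ∈ univ.offDiag.filter
      (fun p : V × V => s(c p.1, c p.2) = z),
      |A p.1 p.2 - reconU c P' p.1 p.2|
      = ∑ p ∈ univ.offDiag.filter
        (fun p : V × V => s(c p.1, c p.2) = z), |A p.1 p.2 - u| :=
    Finset.sum_congr rfl (fun p hp => by rw [hrU p hp])
  have hsW : ∑ p ∈ univ.offDiag.filter
      (fun p : V × V => s(c p.1, c p.2) = z),
      |A p.1 p.2 - reconW c P w p.1 p.2|
      = ∑ p ∈ univ.offDiag.filter
        (fun p : V × V => s(c p.1, c p.2) = z), |A p.1 p.2 - v| :=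
    Finset.sum_congr rfl (fun p hp => by rw [hrW p hp])
  rw [hsU, hsW, sum_abs_const_aux A h01 c z u, sum_abs_const_aux A h01 c z v]
  set nF : ℝ := ((univ.offDiag.filter
      (fun p : V × V => s(c p.1, c p.2) = z)).card : ℝ) with hnF
  set nG : ℝ := ((univ.offDiag.filter
      (fun p : V × V => s(c p.1, c p.2) = z ∧ A p.1 p.2 = 1)).card : ℝ) with hnG
  have hGF : nG ≤ nF := by
    rw [hnF, hnG]
    exact_mod_cast Finset.card_le_card (by
      intro p hp
      simp only [Finset.mem_filter] at hp ⊢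
      exact ⟨hp.1, hp.2.1⟩)
  have hGnn : (0:ℝ) ≤ nG := by positivity
  have habs1 : (1:ℝ) ≤ |1 - v| + |v| := by
    calc (1:ℝ) = |1 - v + v| := by norm_num
    _ ≤ |1 - v| + |v| := abs_add_le _ _
  have ha := abs_nonneg (1 - v)
  have hb := abs_nonneg v
  have hPi : PiCount c z = nF / 2 := rfl
  have hE : ECount A c z = nG / 2 := rfl
  by_cases hzP : z ∈ P
  · by_cases hzc : PiCount c z ≤ 2 * ECount A c z
    · have hzP' : z ∈ P' := Finset.mem_filter.mpr ⟨hzP, hzc⟩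
      have hcond : nF ≤ 2 * nG := by rw [hPi, hE] at hzc; linarith
      simp only [hu, if_pos hzP']
      have h1 : |1 - (1:ℝ)| = 0 := by norm_num
      have h0 : |(1:ℝ)| = 1 := by norm_num
      rw [h1, h0]
      nlinarith [mul_nonneg (sub_nonneg.mpr hcond) ha,
        mul_nonneg (sub_nonneg.mpr hGF) (sub_nonneg.mpr habs1),
        mul_le_mul_of_nonneg_right (show nF - nG ≤ nG by linarith) ha]
    · have hzP' : z ∉ P' := by
        rw [hP'def]; simp only [Finset.mem_filter]; tauto
      have hcond : 2 * nG ≤ nF := by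
        rw [hPi, hE] at hzc; push_neg at hzc; linarith
      simp only [hu, if_neg hzP']
      have h1 : |1 - (0:ℝ)| = 1 := by norm_num
      have h0 : |(0:ℝ)| = 0 := by norm_num
      rw [h1, h0]
      nlinarith [mul_le_mul_of_nonneg_right (show nG ≤ nF - nG by linarith) hb,
        mul_nonneg hGnn (sub_nonneg.mpr habs1)]
  · have hzP' : z ∉ P' := fun h => hzP (Finset.mem_of_mem_filter z h)
    simp only [hu, hv, if_neg hzP, if_neg hzP']
    norm_num
end

section
/- The minimum of RE_1(ω) over all pairs (P, ω) of a superedge set P and a weight function ω supported on P equals the minimum of RĚ_1(P') over all superedge sets P', and both minima equal Σ_{{X,Y}} min(E_{XY}, Π_{XY} − E_{XY}), where the sum ranges over all unordered pairs of supernodes (including self-pairs) with Π_{XY} ≥ 1. -/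
open scoped Classical

/-! ### Auxiliary material -/

/-- The fiber of ordered off-diagonal pairs whose supernode pair is `z`. -/
noncomputable def fibZ {V S : Type*} [Fintype V] (c : V → S) (z : Sym2 S) :
    Finset (V × V) :=
  Finset.univ.offDiag.filter (fun p : V × V => s(c p.1, c p.2) = z)

/-- A swap-invariant finite set of ordered pairs with distinct coordinates has
even cardinality. -/
lemma even_card_of_swap {α : Type*} [DecidableEq α] :
    ∀ s : Finset (α × α), (∀ p ∈ s, (p.2, p.1) ∈ s) → (∀ p ∈ s, p.1 ≠ p.2) →
      Even s.card := by
  intro s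
  induction s using Finset.strongInduction with
  | _ s ih =>
    intro hsw hne
    rcases s.eq_empty_or_nonempty with rfl | ⟨a, ha⟩
    · simp
    · have ha' : (a.2, a.1) ∈ s := hsw a ha
      have hane : a ≠ (a.2, a.1) := by
        intro h
        exact hne a ha (by rw [Prod.ext_iff] at h; exact h.1)
      set t := s \ {a, (a.2, a.1)} with ht
      have hsubset : ({a, (a.2, a.1)} : Finset (α × α)) ⊆ s := by
        intro x hx
        rcases Finset.mem_insert.mp hx with rfl | hx
        · exact ha
        · rw [Finset.mem_singleton] at hx; subst hx; exact ha'
      have hts : t ⊂ s := by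
        refine Finset.ssubset_iff_of_subset (Finset.sdiff_subset) |>.mpr ⟨a, ha, ?_⟩
        simp [ht]
      have htsw : ∀ p ∈ t, (p.2, p.1) ∈ t := by
        intro p hp
        rw [ht, Finset.mem_sdiff] at hp ⊢
        refine ⟨hsw p hp.1, ?_⟩
        intro h
        rcases Finset.mem_insert.mp h with h | h
        · apply hp.2
          have : p = (a.2, a.1) := by
            rw [Prod.ext_iff] at h ⊢
            exact ⟨h.2, h.1⟩
          simp [this]
        · rw [Finset.mem_singleton] at h
          apply hp.2
          have : p = a := by
            rw [Prod.ext_iff] at h ⊢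
            exact ⟨h.2, h.1⟩
          simp [this]
      have hev : Even t.card := ih t hts htsw (fun p hp => hne p (Finset.mem_sdiff.mp hp).1)
      have h2 : ({a, (a.2, a.1)} : Finset (α × α)).card = 2 :=
        Finset.card_pair hane
      have hle : 2 ≤ s.card := h2 ▸ Finset.card_le_card hsubset
      have hcard : s.card = t.card + 2 := by
        rw [ht, Finset.card_sdiff_of_subset hsubset, h2]
        omega
      rw [hcard]
      exact hev.add even_two


/-- Sum of `|A - t|` over a set, for a 0/1 matrix `A`, in terms of counts. -/
lemma sum_abs_split {V : Type*} [Fintype V] (A : V → V → ℝ)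
    (h01 : ∀ i j : V, A i j = 0 ∨ A i j = 1) (s : Finset (V × V)) (t : ℝ) :
    ∑ p ∈ s, |A p.1 p.2 - t| =
      ((s.filter fun p => A p.1 p.2 = 1).card : ℝ) * |1 - t| +
      ((s.filter fun p => ¬ A p.1 p.2 = 1).card : ℝ) * |t| := by
  rw [← Finset.sum_filter_add_sum_filter_not s (fun p => A p.1 p.2 = 1)]
  congr 1
  · have h : ∀ p ∈ s.filter fun p => A p.1 p.2 = 1, |A p.1 p.2 - t| = |1 - t| :=
      fun p hp => by rw [(Finset.mem_filter.mp hp).2]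
    rw [Finset.sum_congr rfl h, Finset.sum_const, nsmul_eq_mul]
  · have h : ∀ p ∈ s.filter fun p => ¬ A p.1 p.2 = 1, |A p.1 p.2 - t| = |t| := by
      intro p hp
      have h := (Finset.mem_filter.mp hp).2
      rcases h01 p.1 p.2 with h0 | h1
      · rw [h0, zero_sub, abs_neg]
      · exact absurd h1 h
    rw [Finset.sum_congr rfl h, Finset.sum_const, nsmul_eq_mul]

/-- The minimum of `RE₁(w)` over all pairs `(P, w)` of a superedge set and a
weight function supported on it equals the minimum of `RĚ₁(P')` over all
superedge sets `P'`, and both equal `Σ_z min (E_z, Π_z − E_z)`, the sum ranging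
over all unordered pairs of supernodes (including self-pairs) with `Π_z ≥ 1`. -/
theorem stmt_13 {V S : Type*} [Fintype V] [Fintype S]
    (A : V → V → ℝ) (hSym : ∀ i j : V, A i j = A j i) (hDiag : ∀ i : V, A i i = 0)
    (h01 : ∀ i j : V, A i j = 0 ∨ A i j = 1)
    (c : V → S) (hc : Function.Surjective c) :
    IsLeast {r : ℝ | ∃ (P : Finset (Sym2 S)) (w : Sym2 S → ℝ),
        (∀ z ∈ P, 1 ≤ PiCount c z) ∧ RE1 A c P w = r}
      (∑ z ∈ Finset.univ.filter (fun z : Sym2 S => 1 ≤ PiCount c z),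
        min (ECount A c z) (PiCount c z - ECount A c z)) ∧
    IsLeast {r : ℝ | ∃ P' : Finset (Sym2 S),
        (∀ z ∈ P', 1 ≤ PiCount c z) ∧ RE1U A c P' = r}
      (∑ z ∈ Finset.univ.filter (fun z : Sym2 S => 1 ≤ PiCount c z),
        min (ECount A c z) (PiCount c z - ECount A c z)) := by
  
  classical
  -- notation
  set fib : Sym2 S → Finset (V × V) :=
    fun z => Finset.univ.offDiag.filter (fun p : V × V => s(c p.1, c p.2) = z)
    with hfib
  set N : Sym2 S → ℝ := fun z => ((fib z).card : ℝ) with hN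
  set Eo : Sym2 S → ℝ := fun z => (((fib z).filter fun p => A p.1 p.2 = 1).card : ℝ)
    with hEo
  have hPi : ∀ z, PiCount c z = N z / 2 := fun z => rfl
  have hEq : ∀ z, ECount A c z = Eo z / 2 := by
    intro z
    unfold ECount
    rw [hEo]
    norm_num
    congr 1
    rw [hfib, Finset.filter_filter]
  have hEo_nonneg : ∀ z, 0 ≤ Eo z := fun z => Nat.cast_nonneg _
  have hEo_le : ∀ z, Eo z ≤ N z := fun z =>
    Nat.cast_le.mpr (Finset.card_le_card (Finset.filter_subset _ _))
  have hnot_card : ∀ z, (((fib z).filter fun p => ¬ A p.1 p.2 = 1).card : ℝ)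
      = N z - Eo z := by
    intro z
    have h := Finset.card_filter_add_card_filter_not
      (s := fib z) (fun p => A p.1 p.2 = 1)
    rw [hEo, hN]
    push_cast [← h]
    ring
  have hfib_even : ∀ z, Even (fib z).card := by
    intro z
    apply even_card_of_swap
    · intro p hp
      rw [hfib] at hp ⊢
      simp only [Finset.mem_filter, Finset.mem_offDiag, Finset.mem_univ, true_and] at hp ⊢
      exact ⟨hp.1.symm, by rw [← hp.2]; exact Sym2.eq_swap⟩
    · intro p hp
      rw [hfib] at hp
      exact (Finset.mem_offDiag.mp (Finset.mem_filter.mp hp).1).2.2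
  have hfib_empty : ∀ z, ¬ 1 ≤ PiCount c z → fib z = ∅ := by
    intro z hz
    rw [hPi, hN] at hz
    push_neg at hz
    have h2 : ((fib z).card : ℝ) < 2 := by linarith
    have h2' : (fib z).card < 2 := by exact_mod_cast h2
    obtain ⟨k, hk⟩ := hfib_even z
    exact Finset.card_eq_zero.mp (by omega)
  -- the key fiberwise computation
  have key : ∀ (B : V → V → ℝ) (t : Sym2 S → ℝ),
      (∀ z, ∀ p ∈ fib z, B p.1 p.2 = t z) →
      ∑ p ∈ Finset.univ.offDiag, |A p.1 p.2 - B p.1 p.2|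
        = ∑ z : Sym2 S, (Eo z * |1 - t z| + (N z - Eo z) * |t z|) := by
    intro B t hconst
    rw [← Finset.sum_fiberwise Finset.univ.offDiag
      (fun p : V × V => s(c p.1, c p.2)) (fun p => |A p.1 p.2 - B p.1 p.2|)]
    refine Finset.sum_congr rfl (fun z _ => ?_)
    have hset : (Finset.univ.offDiag.filter
        fun p : V × V => s(c p.1, c p.2) = z) = fib z := rfl
    rw [hset]
    have hcg : ∀ p ∈ fib z, |A p.1 p.2 - B p.1 p.2| = |A p.1 p.2 - t z| :=
      fun p hp => by rw [hconst z p hp]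
    rw [Finset.sum_congr rfl hcg, sum_abs_split A h01 (fib z) (t z), hnot_card z]
  -- constancy of reconW on fibers
  have hconstW : ∀ (P : Finset (Sym2 S)) (w : Sym2 S → ℝ) (z : Sym2 S),
      ∀ p ∈ fib z, reconW c P w p.1 p.2
        = (if z ∈ P then w z / PiCount c z else 0) := by
    intro P w z p hp
    rw [hfib] at hp
    obtain ⟨hpd, hpz⟩ := Finset.mem_filter.mp hp
    have hne : p.1 ≠ p.2 := (Finset.mem_offDiag.mp hpd).2.2
    unfold reconW
    rw [hpz]
    simp [hne]
  -- constancy of reconU on fibers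
  have hconstU : ∀ (P : Finset (Sym2 S)) (z : Sym2 S),
      ∀ p ∈ fib z, reconU c P p.1 p.2 = (if z ∈ P then (1 : ℝ) else 0) := by
    intro P z p hp
    rw [hfib] at hp
    obtain ⟨hpd, hpz⟩ := Finset.mem_filter.mp hp
    have hne : p.1 ≠ p.2 := (Finset.mem_offDiag.mp hpd).2.2
    unfold reconU
    rw [hpz]
    simp [hne]
  -- min rewriting
  have hmin : ∀ z, min (ECount A c z) (PiCount c z - ECount A c z)
      = min (Eo z) (N z - Eo z) / 2 := by
    intro z
    rw [hEq, hPi, div_sub_div_same, min_div_div_right (by norm_num : (0:ℝ) ≤ 2)]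
  -- lower bound for the weighted model
  have lower : ∀ (P : Finset (Sym2 S)) (w : Sym2 S → ℝ),
      (∑ z ∈ Finset.univ.filter (fun z : Sym2 S => 1 ≤ PiCount c z),
        min (ECount A c z) (PiCount c z - ECount A c z)) ≤ RE1 A c P w := by
    intro P w
    unfold RE1
    rw [key (reconW c P w) (fun z => if z ∈ P then w z / PiCount c z else 0)
      (fun z p hp => hconstW P w z p hp)]
    have hterm : ∀ z : Sym2 S, ∀ t : ℝ,
        min (Eo z) (N z - Eo z) ≤ Eo z * |1 - t| + (N z - Eo z) * |t| := by
      intro z t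
      have hm0 : 0 ≤ min (Eo z) (N z - Eo z) :=
        le_min (hEo_nonneg z) (by linarith [hEo_le z])
      have h1 : (1 : ℝ) ≤ |1 - t| + |t| := by
        calc (1 : ℝ) = |1 - t + t| := by norm_num
        _ ≤ |1 - t| + |t| := abs_add_le _ _
      have h2 : min (Eo z) (N z - Eo z) * (|1 - t| + |t|)
          ≤ Eo z * |1 - t| + (N z - Eo z) * |t| := by
        have ha : min (Eo z) (N z - Eo z) ≤ Eo z := min_le_left _ _
        have hb : min (Eo z) (N z - Eo z) ≤ N z - Eo z := min_le_right _ _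
        nlinarith [abs_nonneg (1 - t), abs_nonneg t]
      nlinarith
    have hterm0 : ∀ z : Sym2 S, ∀ t : ℝ,
        (0 : ℝ) ≤ Eo z * |1 - t| + (N z - Eo z) * |t| := by
      intro z t
      have h1 := hEo_le z
      have h2 := hEo_nonneg z
      have h3 : (0:ℝ) ≤ N z - Eo z := by linarith
      positivity
    calc (∑ z ∈ Finset.univ.filter (fun z : Sym2 S => 1 ≤ PiCount c z),
        min (ECount A c z) (PiCount c z - ECount A c z))
        = ∑ z ∈ Finset.univ.filter (fun z : Sym2 S => 1 ≤ PiCount c z),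
          min (Eo z) (N z - Eo z) / 2 := Finset.sum_congr rfl (fun z _ => hmin z)
      _ ≤ (∑ z ∈ Finset.univ.filter (fun z : Sym2 S => 1 ≤ PiCount c z),
          (Eo z * |1 - (if z ∈ P then w z / PiCount c z else 0)|
            + (N z - Eo z) * |if z ∈ P then w z / PiCount c z else 0|)) / 2 := by
          rw [Finset.sum_div]
          exact Finset.sum_le_sum (fun z _ => by
            have := hterm z (if z ∈ P then w z / PiCount c z else 0)
            linarith)
      _ ≤ (∑ z : Sym2 S,
          (Eo z * |1 - (if z ∈ P then w z / PiCount c z else 0)|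
            + (N z - Eo z) * |if z ∈ P then w z / PiCount c z else 0|)) / 2 := by
          apply div_le_div_of_nonneg_right _ (by norm_num)
          exact Finset.sum_le_sum_of_subset_of_nonneg (Finset.filter_subset _ _)
              (fun z _ _ => hterm0 z _)
  -- the optimal superedge set
  set P₀ : Finset (Sym2 S) := Finset.univ.filter
    (fun z => 1 ≤ PiCount c z ∧ PiCount c z - ECount A c z ≤ ECount A c z) with hP₀
  have hP₀mem : ∀ z ∈ P₀, 1 ≤ PiCount c z := by
    intro z hz
    rw [hP₀, Finset.mem_filter] at hz
    exact hz.2.1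
  -- value of RE1U at P₀
  have hval : RE1U A c P₀
      = ∑ z ∈ Finset.univ.filter (fun z : Sym2 S => 1 ≤ PiCount c z),
          min (ECount A c z) (PiCount c z - ECount A c z) := by
    unfold RE1U
    rw [key (reconU c P₀) (fun z => if z ∈ P₀ then (1 : ℝ) else 0)
      (fun z p hp => hconstU P₀ z p hp)]
    rw [← Finset.sum_filter_add_sum_filter_not Finset.univ
      (fun z : Sym2 S => 1 ≤ PiCount c z)]
    have hzero : ∑ z ∈ Finset.univ.filter (fun z : Sym2 S => ¬ 1 ≤ PiCount c z),
        (Eo z * |1 - (if z ∈ P₀ then (1:ℝ) else 0)|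
          + (N z - Eo z) * |if z ∈ P₀ then (1:ℝ) else 0|) = 0 := by
      apply Finset.sum_eq_zero
      intro z hz
      have hempty : fib z = ∅ := hfib_empty z (Finset.mem_filter.mp hz).2
      have hNz : N z = 0 := by rw [hN]; simp [hempty]
      have hEoz : Eo z = 0 := by rw [hEo]; simp [hempty]
      rw [hNz, hEoz]
      ring
    rw [hzero, add_zero]
    rw [eq_comm, Finset.sum_div, eq_comm]
    apply Finset.sum_congr rfl
    intro z hz
    have hz1 : 1 ≤ PiCount c z := (Finset.mem_filter.mp hz).2
    by_cases hcase : PiCount c z - ECount A c z ≤ ECount A c z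
    · have hzP : z ∈ P₀ := by
        rw [hP₀, Finset.mem_filter]
        exact ⟨Finset.mem_univ z, hz1, hcase⟩
      rw [if_pos hzP, hmin z]
      have hminz : min (Eo z) (N z - Eo z) = N z - Eo z := by
        apply min_eq_right
        rw [hEq, hPi] at hcase
        linarith
      rw [hminz]
      norm_num
    · have hzP : z ∉ P₀ := by
        rw [hP₀, Finset.mem_filter]
        tauto
      rw [if_neg hzP, hmin z]
      have hminz : min (Eo z) (N z - Eo z) = Eo z := by
        apply min_eq_left
        rw [hEq, hPi] at hcase
        linarith
      rw [hminz]
      norm_num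
  -- weighted = unweighted when the weights equal the pair counts
  have hWU : ∀ P : Finset (Sym2 S), (∀ z ∈ P, 1 ≤ PiCount c z) →
      RE1 A c P (fun z => PiCount c z) = RE1U A c P := by
    intro P hP
    unfold RE1 RE1U
    congr 1
    apply Finset.sum_congr rfl
    intro p _
    have hr : reconW c P (fun z => PiCount c z) p.1 p.2 = reconU c P p.1 p.2 := by
      unfold reconW reconU
      split_ifs with h
      · have h1 := hP _ h.2
        have h2 : PiCount c (s(c p.1, c p.2)) ≠ 0 := by
          intro h0
          rw [h0] at h1
          linarith
        exact div_self h2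
      · rfl
    rw [hr]
  constructor
  · constructor
    · exact ⟨P₀, fun z => PiCount c z, hP₀mem, by rw [hWU P₀ hP₀mem, hval]⟩
    · rintro r ⟨P, w, hP, rfl⟩
      exact lower P w
  · constructor
    · exact ⟨P₀, hP₀mem, hval⟩
    · rintro r ⟨P', hP', rfl⟩
      rw [← hWU P' hP']
      exact lower P' (fun z => PiCount c z)
end
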